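/- Let (E, ℛ, τ) satisfy conditions (i), (ii), (iii). Then E(E,ℛ) is a subsemigroup of the idempotents of ℤ[E×]: every element of E(E,ℛ) is an idempotent of ℤ[E×], and for all x, y ∈ E(E,ℛ) the product x·y again lies in E(E,ℛ). -/

import Mathlib

set_option linter.unusedSectionVars false

/-- A *semilattice with zero*: a commutative idempotent semigroup with an
absorbing element `0`. -/
class SemilatticeWithZero (E : Type) extends CommSemigroup E, Zero E where
  mul_idem : ∀ e : E, e * e = e
  zero_mul : ∀ e : E, 0 * e = 0

namespace IndRes

variable {E : Type} [SemilatticeWithZero E]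

/-- `single e c`, viewed in the semigroup algebra `ℤ[E]`. -/
noncomputable def sgl (e : E) (c : ℤ) : MonoidAlgebra ℤ E := MonoidAlgebra.single e c

/-- Truncation map deleting the coefficient at `0`. -/
noncomputable def T (x : MonoidAlgebra ℤ E) : MonoidAlgebra ℤ E := x - sgl 0 (x.coeff 0)

lemma sgl_apply_self (e : E) (c : ℤ) : (sgl e c).coeff e = c := Finsupp.single_eq_same

lemma sgl_apply_ne (e d : E) (c : ℤ) (h : e ≠ d) : (sgl e c).coeff d = 0 := Finsupp.single_eq_of_ne h.symm

lemma sgl_add (e : E) (c d : ℤ) : sgl e (c + d) = sgl e c + sgl e d := MonoidAlgebra.single_add e c d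

lemma sgl_sub (e : E) (c d : ℤ) : sgl e (c - d) = sgl e c - sgl e d := MonoidAlgebra.single_sub e c d

lemma T_apply_zero (x : MonoidAlgebra ℤ E) : (T x).coeff 0 = 0 := by
  show ((x - sgl 0 (x.coeff 0) : MonoidAlgebra ℤ E)).coeff 0 = 0
  rw [MonoidAlgebra.coeff_sub, Finsupp.sub_apply, sgl_apply_self, sub_self]

/-- `ℤ[E^×]`, realized as the additive subgroup of the semigroup algebra
`ℤ[E]` consisting of the elements whose coefficient at `0` vanishes; it is the free
`ℤ`-module with basis `E^× = E \ {0}`. -/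
noncomputable def ZS (E : Type) [SemilatticeWithZero E] : AddSubgroup (MonoidAlgebra ℤ E) where
  carrier := {x | x.coeff 0 = 0}
  zero_mem' := rfl
  add_mem' := by
    intro a b ha hb
    simp only [Set.mem_setOf_eq] at *
    rw [MonoidAlgebra.coeff_add, Finsupp.add_apply, ha, hb, add_zero]
  neg_mem' := by
    intro a ha
    simp only [Set.mem_setOf_eq] at *
    rw [MonoidAlgebra.coeff_neg, Finsupp.neg_apply, ha, neg_zero]

/-- The integral semigroup ring `ℤ[E^×]`. -/
abbrev ZE (E : Type) [SemilatticeWithZero E] : Type := ↥(ZS E)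

lemma mem_ZS {x : MonoidAlgebra ℤ E} : x ∈ ZS E ↔ x.coeff 0 = 0 := Iff.rfl

lemma T_eq_self {x : MonoidAlgebra ℤ E} (h : x.coeff 0 = 0) : T x = x := by
  simp [T, h, sgl]

lemma T_add (a b : MonoidAlgebra ℤ E) : T (a + b) = T a + T b := by
  unfold T
  rw [show ((a + b).coeff 0) = a.coeff 0 + b.coeff 0 from by
    rw [MonoidAlgebra.coeff_add, Finsupp.add_apply], sgl_add]
  abel

lemma T_sub_sgl (x : MonoidAlgebra ℤ E) (m : ℤ) : T (x - sgl 0 m) = T x := by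
  unfold T
  have h : ((x - sgl 0 m : MonoidAlgebra ℤ E)).coeff 0 = x.coeff 0 - m := by
    rw [MonoidAlgebra.coeff_sub, Finsupp.sub_apply, sgl_apply_self]
  rw [h, sgl_sub]
  abel

lemma single_zero_mul (c : ℤ) (b : MonoidAlgebra ℤ E) :
    (sgl 0 c) * b = sgl 0 (((sgl 0 c * b : MonoidAlgebra ℤ E)).coeff 0) := by
  classical
  ext d
  by_cases hd : d = 0
  · subst hd; rw [sgl_apply_self]
  · rw [sgl_apply_ne 0 d _ (Ne.symm hd)]
    by_contra h
    have hmem : d ∈ ((sgl (0:E) c) * b).coeff.support := Finsupp.mem_support_iff.mpr h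
    have h2 := MonoidAlgebra.support_coeff_mul_subset (sgl (0:E) c) b hmem
    rw [Finset.mem_mul] at h2
    obtain ⟨a, ha, b', _, hab⟩ := h2
    have ha' : a = 0 := by
      have := Finsupp.support_single_subset (ha : a ∈ (Finsupp.single (0:E) c).support)
      simpa using this
    exact hd (by rw [← hab, ha', SemilatticeWithZero.zero_mul])

lemma T_mul_left (a b : MonoidAlgebra ℤ E) : T (T a * b) = T (a * b) := by
  have h1 : T a * b = a * b - (sgl 0 (a.coeff 0)) * b := by rw [T, sub_mul]
  rw [h1, single_zero_mul, T_sub_sgl]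

lemma T_mul_right (a b : MonoidAlgebra ℤ E) : T (a * T b) = T (a * b) := by
  rw [mul_comm a (T b), T_mul_left, mul_comm]

noncomputable instance : Mul (ZE E) :=
  ⟨fun x y => ⟨T (x.1 * y.1), T_apply_zero _⟩⟩

lemma ZE.val_mul (x y : ZE E) : (x * y).1 = T (x.1 * y.1) := rfl

noncomputable instance : NonUnitalCommRing (ZE E) :=
  { (inferInstance : AddCommGroup (ZE E)) with
    mul := (· * ·)
    left_distrib := by
      intro x y z
      apply Subtype.ext
      show T (x.1 * (y.1 + z.1)) = T (x.1 * y.1) + T (x.1 * z.1)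
      rw [mul_add, T_add]
    right_distrib := by
      intro x y z
      apply Subtype.ext
      show T ((x.1 + y.1) * z.1) = T (x.1 * z.1) + T (y.1 * z.1)
      rw [add_mul, T_add]
    zero_mul := by
      intro x
      apply Subtype.ext
      show T ((0 : MonoidAlgebra ℤ E) * x.1) = 0
      rw [zero_mul]
      simp [T, sgl]
    mul_zero := by
      intro x
      apply Subtype.ext
      show T (x.1 * (0 : MonoidAlgebra ℤ E)) = 0
      rw [mul_zero]
      simp [T, sgl]
    mul_assoc := by
      intro x y z
      apply Subtype.ext
      show T (T (x.1 * y.1) * z.1) = T (x.1 * T (y.1 * z.1))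
      rw [T_mul_left, T_mul_right, mul_assoc]
    mul_comm := by
      intro x y
      apply Subtype.ext
      show T (x.1 * y.1) = T (y.1 * x.1)
      rw [mul_comm] }

/-- The canonical image of `e ∈ E` in `ℤ[E^×]`: the basis element `e` if `e ≠ 0`,
and `0` if `e = 0`. -/
noncomputable def elt (e : E) : ZE E := ⟨T (sgl e 1), T_apply_zero _⟩

/-- Product of a (nonempty) finite family in a commutative non-unital ring, computed inside
the unitization.  For a nonempty index set this is the iterated product. -/
noncomputable def nprod {ι A : Type} [NonUnitalCommRing A] (s : Finset ι) (f : ι → A) : A :=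
  (∏ j ∈ s, (Unitization.inr (f j) : Unitization ℤ A)).snd

/-- The join `⋁_{j ∈ J} x_j = ∑_{∅ ≠ J' ⊆ J} (-1)^{|J'|+1} ∏_{j ∈ J'} x_j`
of a finite family of idempotents of a commutative non-unital ring. -/
noncomputable def rjoin {ι A : Type} [NonUnitalCommRing A] (s : Finset ι) (f : ι → A) : A :=
  ∑ t ∈ s.powerset.filter (fun t => t.Nonempty), ((-1 : ℤ) ^ (t.card + 1)) • nprod t f

/-- The join `⋁_{j ∈ J} e_j ∈ ℤ[E^×]` of a finite family of elements of `E`: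
`∑_{∅ ≠ J' ⊆ J} (-1)^{|J'|+1} ∏_{j ∈ J'} e_j`, where a product whose value in `E`
is `0` contributes `0`. -/
noncomputable def join {ι : Type} (s : Finset ι) (e : ι → E) : ZE E :=
  rjoin s (fun j => elt (e j))

/-- Iterated product of a nonempty list in a semigroup with zero (the value on the
empty list is the junk value `0`). -/
def listProd : List E → E
  | [] => 0
  | [a] => a
  | a :: b :: l => a * listProd (b :: l)

/-- The product `∏_{j ∈ s} f j ∈ E` of a (nonempty) finite family. -/
noncomputable def eprod {ι : Type} (s : Finset ι) (f : ι → E) : E :=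
  listProd (s.toList.map f)

/-- The support `E(x)` of `x ∈ ℤ[E^×]`: the finite set of elements of `E^×` appearing
with a nonzero coefficient in the reduced form of `x`. -/
noncomputable def supp (x : ZE E) : Finset E := x.1.coeff.support

section Action

variable {Γ : Type} [Group Γ] [MulAction Γ E]

/-- The induced action of `g ∈ Γ` on `ℤ[E^×]`: the `ℤ`-linear map sending a basis
element `e ∈ E^×` to `g • e`.  (When the action fixes `0` — which is the case for an
action by semigroup automorphisms fixing `0` — the truncation `T` is a no-op, and this
is the automorphism of `ℤ[E^×]` induced by `τ_g`.) -/
noncomputable def act (g : Γ) (x : ZE E) : ZE E :=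
  ⟨T (MonoidAlgebra.ofCoeff (Finsupp.mapDomain (fun e : E => g • e) x.1.coeff)), T_apply_zero _⟩

end Action



attribute [local instance] Classical.propDecidable

variable {E : Type} [SemilatticeWithZero E]

/-- A Γ-semilattice structure: the group acts by semigroup automorphisms fixing `0`. -/
def IsGammaSL (Γ E : Type) [Group Γ] [SemilatticeWithZero E] [MulAction Γ E] : Prop :=
  (∀ (g : Γ) (x y : E), g • (x * y) = (g • x) * (g • y)) ∧ (∀ g : Γ, g • (0 : E) = 0)

/-- The set `E_φ`. -/
def Ephi {D : Type} [NonUnitalCommRing D] (φ : ZE E →ₙ+* D) : Set (ZE E) :=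
  { x | ∃ (e : E) (J : Finset E), e ≠ 0 ∧ (∀ f ∈ J, f ≠ 0 ∧ f * e = f ∧ f ≠ e) ∧
      x = elt e - join J (fun f => f) ∧
      φ (elt e) = rjoin J (fun f => φ (elt f)) }

/-- `R` is a finite cover for `e ∈ E^×`. -/
def IsCover (e : E) (R : Finset E) : Prop :=
  (∀ f ∈ R, f ≠ 0 ∧ f * e = f) ∧
  ∀ f' : E, f' ≠ 0 → f' * e = f' → ∃ f ∈ R, f' * f ≠ 0

/-- `ℛ` is a collection of finite covers for `E`. -/
def CovSystem (ℛ : E → Set (Finset E)) : Prop :=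
  ∀ e : E, e ≠ 0 → ∀ R ∈ ℛ e, IsCover e R

/-- Condition (i). -/
def CondI (ℛ : E → Set (Finset E)) : Prop :=
  ∀ d e : E, d ≠ 0 → e ≠ 0 → d * e ≠ 0 → ∀ R ∈ ℛ e,
    d * e ∈ (R.image (fun f => d * f)).erase 0 ∨ (R.image (fun f => d * f)).erase 0 ∈ ℛ (d * e)

/-- Condition (ii). -/
def CondII (ℛ : E → Set (Finset E)) : Prop :=
  ∀ e : E, e ≠ 0 → ∀ r : ℕ, 0 < r → ∀ Rs : Fin r → Finset E,
    Function.Injective Rs → (∀ i, Rs i ∈ ℛ e) → ∀ ε : Fin r → E,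
    (∀ i, ε i ∈ supp (join (Rs i) (fun f => f))) → ∀ j : Fin r,
      (if r = 1 then e else eprod (Finset.univ.erase j) ε) ≠ 0 →
      eprod Finset.univ ε * (if r = 1 then e else eprod (Finset.univ.erase j) ε)
          = eprod Finset.univ ε ∧
      eprod Finset.univ ε ≠ (if r = 1 then e else eprod (Finset.univ.erase j) ε)

/-- Condition (iii). -/
def CondIII (Γ : Type) [Group Γ] [MulAction Γ E] (ℛ : E → Set (Finset E)) : Prop :=
  ∀ (g : Γ) (e : E), e ≠ 0 →
    (fun R : Finset E => R.image (fun f => g • f)) '' (ℛ e) = ℛ (g • e)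

/-- `e(𝒮) = ∏_{R ∈ 𝒮} (e - ⋁R) ∈ ℤ[E^×]`. -/
noncomputable def eS (e : E) (S : Finset (Finset E)) : ZE E :=
  nprod S (fun R => elt e - join R (fun f => f))

/-- `E(E,ℛ) = {e(𝒮) : e ∈ E^×, 𝒮 ⊆ ℛ(e) nonempty finite} ∪ {0} ⊆ ℤ[E^×]`. -/
def EER (ℛ : E → Set (Finset E)) : Set (ZE E) :=
  {x | ∃ (e : E) (S : Finset (Finset E)), e ≠ 0 ∧ S.Nonempty ∧ ↑S ⊆ ℛ e ∧ x = eS e S} ∪ {0}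

/-- `R(𝒮,R̃) = {e(𝒮 ∪ {R̃})} ∪ {f ⬝ e(𝒮) : f ∈ R̃, f ⬝ e(𝒮) ≠ 0}`. -/
noncomputable def RSR (e : E) (S : Finset (Finset E)) (Rt : Finset E) : Finset (ZE E) :=
  insert (eS e (insert Rt S)) ((Rt.image (fun f => elt f * eS e S)).erase 0)

/-- The collection of finite covers `ℛ(E,ℛ)` on `E(E,ℛ)`, assigning to an element
`x = e(𝒮)` of `E(E,ℛ)^×` the covers `R(𝒮,R̃)`, `R̃ ∈ ℛ(e) ∖ 𝒮` (over all ways of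
presenting `x` in the form `e(𝒮)`). -/
def RER (ℛ : E → Set (Finset E)) (x : ZE E) : Set (Finset (ZE E)) :=
  {C | ∃ (e : E) (S : Finset (Finset E)) (Rt : Finset E),
        e ≠ 0 ∧ S.Nonempty ∧ ↑S ⊆ ℛ e ∧ Rt ∈ ℛ e ∧ Rt ∉ S ∧ x = eS e S ∧ C = RSR e S Rt}

/-- The `ℤ`-linear map `ℤ[E₁^×] → ℤ[E₂^×]` induced by a map `θ` from `E₁` to `ℤ[E₂^×]`,
sending a basis element `e' ∈ E₁^×` to `θ e'`. -/
noncomputable def indMap {E₁ E₂ : Type} [SemilatticeWithZero E₁] [SemilatticeWithZero E₂]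
    (θ : E₁ → ZE E₂) : ZE E₁ →ₗ[ℤ] ZE E₂ :=
  (Finsupp.linearCombination ℤ θ).comp
    ((MonoidAlgebra.coeffLinearEquiv ℤ).toLinearMap.comp ((ZS E₁).subtype.toIntLinearMap))

/-- `(E₁, ℛ₁, θ)` is a realization of the construction `(E(E,ℛ), ℛ(E,ℛ))`:
`θ` identifies the abstract Γ-semilattice `E₁` with `E(E,ℛ) ⊆ ℤ[E^×]` (equivariantly,
multiplicatively and preserving `0`), and `ℛ₁` corresponds to `ℛ(E,ℛ)` under this
identification. -/
def Realizes {Γ E E₁ : Type} [Group Γ] [SemilatticeWithZero E] [MulAction Γ E]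
    [SemilatticeWithZero E₁] [MulAction Γ E₁]
    (ℛ : E → Set (Finset E)) (ℛ₁ : E₁ → Set (Finset E₁)) (θ : E₁ → ZE E) : Prop :=
  Function.Injective θ ∧ Set.range θ = EER ℛ ∧ θ 0 = 0 ∧
  (∀ x y : E₁, θ (x * y) = θ x * θ y) ∧
  (∀ (g : Γ) (x : E₁), θ (g • x) = act g (θ x)) ∧
  (∀ e' : E₁, e' ≠ 0 → ∀ C : Finset E₁, C ∈ ℛ₁ e' ↔ C.image θ ∈ RER ℛ (θ e'))

end IndRes

open IndRes

namespace IndRes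

open Unitization Finset

attribute [local instance] Classical.propDecidable

variable {E : Type} [SemilatticeWithZero E]

lemma elt_zero : (elt (0 : E)) = 0 := by
  apply Subtype.ext
  show T (sgl (0:E) 1) = ((0 : ZE E) : MonoidAlgebra ℤ E)
  simp [T, sgl_apply_self]

lemma elt_mul (d e : E) : elt d * elt e = elt (d * e) := by
  by_cases hd : d = 0
  · subst hd
    rw [elt_zero, SemilatticeWithZero.zero_mul, elt_zero, zero_mul]
  by_cases he : e = 0
  · subst he
    rw [elt_zero, show d * 0 = 0 from by rw [mul_comm]; exact SemilatticeWithZero.zero_mul d,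
      elt_zero, mul_zero]
  · apply Subtype.ext
    rw [ZE.val_mul]
    have hval : ∀ c : E, c ≠ 0 → ((elt c : ZE E) : MonoidAlgebra ℤ E) = sgl c 1 := by
      intro c hc
      exact T_eq_self (sgl_apply_ne c 0 1 hc)
    rw [hval d hd, hval e he]
    have hss : (sgl d 1 : MonoidAlgebra ℤ E) * sgl e 1 = sgl (d * e) 1 := by
      simp only [sgl]
      rw [MonoidAlgebra.single_mul_single, one_mul]
    rw [hss]
    rfl

lemma elt_idem (e : E) : elt e * elt e = elt e := by
  rw [elt_mul, SemilatticeWithZero.mul_idem]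

/-! ### Generic idempotent lemmas -/

lemma idem_pow {M : Type} [Monoid M] {a : M} (ha : a * a = a) :
    ∀ n : ℕ, n ≠ 0 → a ^ n = a := by
  intro n hn
  induction n with
  | zero => exact absurd rfl hn
  | succ m ih =>
    rcases Nat.eq_zero_or_pos m with hm | hm
    · subst hm; rw [pow_one]
    · rw [pow_succ, ih hm.ne', ha]

lemma prod_mul_of_idem {M ι : Type} [CommMonoid M] {s : Finset ι} {f : ι → M}
    (hid : ∀ j ∈ s, f j * f j = f j) {a : ι} (ha : a ∈ s) :
    (∏ j ∈ s, f j) * f a = ∏ j ∈ s, f j := by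
  classical
  rw [← Finset.mul_prod_erase s f ha, mul_comm (f a), mul_assoc, hid a ha,
    mul_comm _ (f a)]

lemma prod_absorb {M ι : Type} [CommMonoid M] {s : Finset ι} {f : ι → M}
    (hid : ∀ j ∈ s, f j * f j = f j) :
    ∀ t : Finset ι, t ⊆ s → (∏ j ∈ s, f j) * ∏ j ∈ t, f j = ∏ j ∈ s, f j := by
  classical
  intro t
  induction t using Finset.induction with
  | empty => intro _; rw [Finset.prod_empty, mul_one]
  | @insert a t ha ih =>
    intro hsub
    have has : a ∈ s := hsub (Finset.mem_insert_self a t)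
    rw [Finset.prod_insert ha, ← mul_assoc, prod_mul_of_idem hid has,
      ih (fun x hx => hsub (Finset.mem_insert_of_mem hx))]

lemma prod_image_of_idem {M ι β : Type} [CommMonoid M] [DecidableEq β]
    (s : Finset ι) (c : ι → β) (h : β → M)
    (hid : ∀ b ∈ s.image c, h b * h b = h b) :
    ∏ j ∈ s, h (c j) = ∏ g ∈ s.image c, h g := by
  classical
  induction s using Finset.induction with
  | empty => simp
  | @insert a s ha ih =>
    have hid' : ∀ b ∈ s.image c, h b * h b = h b := by
      intro b hb
      exact hid b (by rw [Finset.image_insert]; exact Finset.mem_insert_of_mem hb)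
    by_cases hmem : c a ∈ s.image c
    · rw [Finset.prod_insert ha, ih hid', Finset.image_insert,
        Finset.insert_eq_self.mpr hmem, mul_comm, prod_mul_of_idem hid' hmem]
    · rw [Finset.prod_insert ha, Finset.image_insert, Finset.prod_insert hmem, ih hid']

/-! ### `inr` descriptions -/

lemma nprod_empty {ι : Type} (f : ι → ZE E) : nprod (∅ : Finset ι) f = 0 := by
  unfold nprod
  rw [Finset.prod_empty]
  exact Unitization.snd_one

lemma inr_mul' (a b : ZE E) :
    (↑(a * b) : Unitization ℤ (ZE E)) = ↑a * ↑b :=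
  Unitization.inr_mul ℤ a b

lemma inr_nprod {ι : Type} (s : Finset ι) (hs : s.Nonempty) (f : ι → ZE E) :
    (↑(nprod s f) : Unitization ℤ (ZE E)) = ∏ j ∈ s, (↑(f j) : Unitization ℤ (ZE E)) := by
  apply Unitization.ext
  · rw [Unitization.fst_inr]
    obtain ⟨j₀, hj₀⟩ := hs
    have h2 : (∏ j ∈ s, (↑(f j) : Unitization ℤ (ZE E))).fst
        = ∏ j ∈ s, ((↑(f j) : Unitization ℤ (ZE E)).fst) :=
      map_prod (Unitization.fstHom ℤ (ZE E)).toMonoidHom _ s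
    rw [h2]
    exact (Finset.prod_eq_zero hj₀ (Unitization.fst_inr ℤ (f j₀))).symm
  · rw [Unitization.snd_inr]
    rfl

lemma nprod_congr {ι : Type} (s : Finset ι) (f g : ι → ZE E)
    (h : ∀ j ∈ s, f j = g j) : nprod s f = nprod s g := by
  unfold nprod
  refine congrArg (fun u : Unitization ℤ (ZE E) => u.snd) ?_
  exact Finset.prod_congr rfl (fun j hj => by rw [h j hj])

lemma inr_sum {ι : Type} (s : Finset ι) (f : ι → ZE E) :
    (↑(∑ j ∈ s, f j) : Unitization ℤ (ZE E)) = ∑ j ∈ s, (↑(f j) : Unitization ℤ (ZE E)) := by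
  classical
  induction s using Finset.induction with
  | empty => exact Unitization.inr_zero ℤ
  | @insert a s ha ih =>
    rw [Finset.sum_insert ha, Finset.sum_insert ha, Unitization.inr_add, ih]

lemma inr_rjoin {ι : Type} (s : Finset ι) (f : ι → ZE E) :
    (↑(rjoin s f) : Unitization ℤ (ZE E))
      = 1 - ∏ j ∈ s, (1 - (↑(f j) : Unitization ℤ (ZE E))) := by
  classical
  have hprod : ∏ j ∈ s, (1 - (↑(f j) : Unitization ℤ (ZE E)))
      = ∑ t ∈ s.powerset, (-1 : Unitization ℤ (ZE E)) ^ t.card * ∏ j ∈ t, ↑(f j) := by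
    have h0 : ∀ j ∈ s, (1 - (↑(f j) : Unitization ℤ (ZE E))) = -↑(f j) + 1 := by
      intro j _; ring
    rw [Finset.prod_congr rfl h0, Finset.prod_add (fun j => -(↑(f j) : Unitization ℤ (ZE E))) (fun _ => 1) s]
    refine Finset.sum_congr rfl (fun t _ => ?_)
    rw [Finset.prod_const_one, mul_one]
    congr 1
    calc ∏ j ∈ t, (-(↑(f j) : Unitization ℤ (ZE E)))
        = ∏ j ∈ t, ((-1 : Unitization ℤ (ZE E)) * ↑(f j)) := by
          refine Finset.prod_congr rfl (fun j _ => ?_); ring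
      _ = (-1 : Unitization ℤ (ZE E)) ^ t.card * ∏ j ∈ t, ↑(f j) := by
          rw [Finset.prod_mul_distrib, Finset.prod_const]
  have hfilter : s.powerset.filter (fun t => t.Nonempty) = s.powerset.erase ∅ := by
    ext t
    simp [Finset.mem_filter, Finset.mem_erase, Finset.nonempty_iff_ne_empty, and_comm]
  have hLHS : (↑(rjoin s f) : Unitization ℤ (ZE E))
      = ∑ t ∈ s.powerset.erase ∅,
          (-1 : Unitization ℤ (ZE E)) ^ (t.card + 1) * ∏ j ∈ t, ↑(f j) := by
    unfold rjoin
    rw [inr_sum, hfilter]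
    refine Finset.sum_congr rfl (fun t ht => ?_)
    have ht' : t.Nonempty :=
      Finset.nonempty_iff_ne_empty.mpr (Finset.mem_erase.mp ht).1
    show (↑(((-1 : ℤ) ^ (t.card + 1)) • nprod t f) : Unitization ℤ (ZE E)) = _
    rw [Unitization.inr_smul, inr_nprod t ht' f, zsmul_eq_mul]
    congr 1
    exact (Int.cast_pow (R := Unitization ℤ (ZE E)) (-1) (t.card+1)).trans (by rw [Int.cast_neg, Int.cast_one])
  rw [hLHS, hprod]
  rw [← Finset.add_sum_erase _ _ (Finset.empty_mem_powerset s)]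
  simp only [Finset.card_empty, pow_zero, one_mul, Finset.prod_empty, mul_one]
  rw [sub_add_eq_sub_sub, sub_self, zero_sub, ← Finset.sum_neg_distrib]
  refine Finset.sum_congr rfl (fun t _ => ?_)
  ring

/-- basis element of the unitization -/
noncomputable def xe (f : E) : Unitization ℤ (ZE E) := ↑(elt f)

lemma xe_mul (d e : E) : xe d * xe e = xe (d * e) := by
  unfold xe; rw [← inr_mul', elt_mul]

lemma xe_idem (e : E) : xe e * xe e = xe e := by
  rw [xe_mul, SemilatticeWithZero.mul_idem]

lemma xe_zero : xe (0 : E) = 0 := by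
  unfold xe; rw [elt_zero]; exact Unitization.inr_zero ℤ

lemma inr_join {ι : Type} (s : Finset ι) (c : ι → E) :
    (↑(join s c) : Unitization ℤ (ZE E)) = 1 - ∏ j ∈ s, (1 - xe (c j)) :=
  inr_rjoin s _

lemma pull_lemma (d : E) {ι : Type} (s : Finset ι) (c : ι → E) :
    xe d * ∏ j ∈ s, (1 - xe (c j)) = xe d * ∏ j ∈ s, (1 - xe (d * c j)) := by
  classical
  induction s using Finset.induction with
  | empty => rfl
  | @insert a s ha ih =>
    have hstep : xe d * (1 - xe (c a)) = xe d * (1 - xe (d * c a)) := by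
      have h1 : xe d * xe (c a) = xe (d * c a) := xe_mul d (c a)
      have h2 : xe d * xe (d * c a) = xe (d * c a) := by
        rw [xe_mul, ← mul_assoc, SemilatticeWithZero.mul_idem]
      linear_combination h2 - h1
    rw [Finset.prod_insert ha, Finset.prod_insert ha]
    linear_combination (∏ j ∈ s, (1 - xe (c j))) * hstep
      + (1 - xe (d * c a)) * ih

lemma absorb_lemma (d : E) {ι : Type} (s : Finset ι) (c : ι → E) :
    (1 - xe d) * (1 - ∏ j ∈ s, (1 - xe (d * c j))) = 0 := by
  classical
  induction s using Finset.induction with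
  | empty => simp
  | @insert a s ha ih =>
    have hg : (1 - xe d) * xe (d * c a) = 0 := by
      have h2 : xe d * xe (d * c a) = xe (d * c a) := by
        rw [xe_mul, ← mul_assoc, SemilatticeWithZero.mul_idem]
      linear_combination -h2
    rw [Finset.prod_insert ha]
    linear_combination ih + (∏ j ∈ s, (1 - xe (d * c j))) * hg

lemma elt_mul_join (d : E) {ι : Type} (s : Finset ι) (c : ι → E) :
    elt d * join s c = join s (fun j => d * c j) := by
  apply Unitization.inr_injective (R := ℤ)
  rw [inr_mul', inr_join, inr_join]
  have hpull := pull_lemma d s c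
  have habs := absorb_lemma d s c
  show xe d * (1 - ∏ j ∈ s, (1 - xe (c j))) = 1 - ∏ j ∈ s, (1 - xe (d * c j))
  linear_combination -habs - hpull

lemma join_congr {ι : Type} (s : Finset ι) (c c' : ι → E)
    (h : ∀ j ∈ s, c j = c' j) : join s c = join s c' := by
  apply Unitization.inr_injective (R := ℤ)
  rw [inr_join, inr_join]
  congr 1
  exact Finset.prod_congr rfl (fun j hj => by rw [h j hj])

lemma join_image {ι : Type} (s : Finset ι) (c : ι → E) :
    join s c = join (s.image c) (fun g => g) := by
  classical
  apply Unitization.inr_injective (R := ℤ)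
  rw [inr_join, inr_join]
  congr 1
  exact prod_image_of_idem s c (fun g => 1 - xe g)
    (fun b _ => by linear_combination xe_idem b)

lemma join_erase_zero (s : Finset E) :
    join s (fun f => f) = join (s.erase 0) (fun f => f) := by
  classical
  apply Unitization.inr_injective (R := ℤ)
  rw [inr_join, inr_join]
  congr 1
  exact (Finset.prod_erase s (by rw [xe_zero, sub_zero])).symm

lemma join_idem {ι : Type} (s : Finset ι) (c : ι → E) :
    join s c * join s c = join s c := by
  apply Unitization.inr_injective (R := ℤ)
  rw [inr_mul', inr_join]
  have hP : (∏ j ∈ s, (1 - xe (c j))) * (∏ j ∈ s, (1 - xe (c j)))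
      = ∏ j ∈ s, (1 - xe (c j)) := by
    rw [← Finset.prod_mul_distrib]
    exact Finset.prod_congr rfl (fun j _ => by linear_combination xe_idem (c j))
  linear_combination hP

lemma elt_sub_join_idem (e : E) (R : Finset E) (h : ∀ f ∈ R, f * e = f) :
    (elt e - join R (fun f => f)) * (elt e - join R (fun f => f))
      = elt e - join R (fun f => f) := by
  have h2 : elt e * join R (fun f => f) = join R (fun f => f) := by
    rw [elt_mul_join]
    exact join_congr _ _ _ (fun f hf => by rw [mul_comm]; exact h f hf)
  have h1 := elt_idem e
  have h3 := join_idem R (fun f => f)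
  rw [mul_sub, sub_mul, sub_mul, h1, h3, h2, mul_comm (join R fun f => f) (elt e), h2]
  abel

lemma key_factor (d e : E) (R : Finset E) :
    elt d * (elt e - join R (fun f => f))
      = elt (d * e) - join ((R.image (fun f => d * f)).erase 0) (fun f => f) := by
  rw [mul_sub, elt_mul, elt_mul_join, join_image, join_erase_zero]

lemma join_top (u : E) (S : Finset E) (huS : u ∈ S) (habs : ∀ g ∈ S, g * u = g) :
    join S (fun f => f) = elt u := by
  classical
  apply Unitization.inr_injective (R := ℤ)
  rw [inr_join]
  have key : ∀ t : Finset E, (∀ g ∈ t, g * u = g) →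
      (1 - xe u) * ∏ g ∈ t, (1 - xe g) = 1 - xe u := by
    intro t
    induction t using Finset.induction with
    | empty => intro _; simp
    | @insert a t ha ih =>
      intro h'
      have hstep : (1 - xe u) * (1 - xe a) = 1 - xe u := by
        have hau : xe u * xe a = xe a := by
          rw [xe_mul, mul_comm u a, h' a (Finset.mem_insert_self a t)]
        linear_combination hau
      rw [Finset.prod_insert ha, ← mul_assoc, hstep,
        ih (fun g hg => h' g (Finset.mem_insert_of_mem hg))]
  have hprod : ∏ g ∈ S, (1 - xe g) = 1 - xe u := by
    rw [← Finset.mul_prod_erase S _ huS]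
    exact key (S.erase u) (fun g hg => habs g (Finset.mem_of_mem_erase hg))
  rw [hprod]
  show (1 : Unitization ℤ (ZE E)) - (1 - xe u) = xe u
  ring

lemma nprod_idem {ι : Type} (s : Finset ι) (f : ι → ZE E)
    (h : ∀ j ∈ s, f j * f j = f j) : nprod s f * nprod s f = nprod s f := by
  rcases s.eq_empty_or_nonempty with rfl | hs
  · rw [nprod_empty, mul_zero]
  · apply Unitization.inr_injective (R := ℤ)
    rw [inr_mul', inr_nprod s hs, ← Finset.prod_mul_distrib]
    exact Finset.prod_congr rfl (fun j hj => by rw [← inr_mul', h j hj])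

lemma nprod_eq_zero {ι : Type} (s : Finset ι) (f : ι → ZE E) {j₀ : ι}
    (hj : j₀ ∈ s) (h : f j₀ = 0) : nprod s f = 0 := by
  unfold nprod
  rw [Finset.prod_eq_zero (f := fun j => (↑(f j) : Unitization ℤ (ZE E))) hj (by rw [h]; exact Unitization.inr_zero ℤ)]
  exact Unitization.snd_zero

lemma elt_mul_nprod (d : E) {ι : Type} (s : Finset ι) (hs : s.Nonempty) (f : ι → ZE E) :
    elt d * nprod s f = nprod s (fun j => elt d * f j) := by
  apply Unitization.inr_injective (R := ℤ)
  rw [inr_mul', inr_nprod s hs, inr_nprod s hs]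
  have h0 : ∀ j ∈ s, (↑(elt d * f j) : Unitization ℤ (ZE E)) = xe d * ↑(f j) :=
    fun j _ => inr_mul' _ _
  rw [Finset.prod_congr rfl h0, Finset.prod_mul_distrib, Finset.prod_const,
    idem_pow (xe_idem d) s.card (by simpa using hs.card_ne_zero)]
  rfl

lemma nprod_image {ι β : Type} [DecidableEq β] (s : Finset ι) (hs : s.Nonempty)
    (c : ι → β) (H : β → ZE E)
    (hid : ∀ b ∈ s.image c, H b * H b = H b) :
    nprod s (fun j => H (c j)) = nprod (s.image c) H := by
  apply Unitization.inr_injective (R := ℤ)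
  rw [inr_nprod s hs, inr_nprod _ (hs.image c)]
  exact prod_image_of_idem s c (fun b => (↑(H b) : Unitization ℤ (ZE E)))
    (fun b hb => by rw [← inr_mul', hid b hb])

lemma nprod_union {ι : Type} [DecidableEq ι] (A B : Finset ι) (hA : A.Nonempty)
    (hB : B.Nonempty) (f : ι → ZE E) (hid : ∀ j ∈ A ∪ B, f j * f j = f j) :
    nprod A f * nprod B f = nprod (A ∪ B) f := by
  apply Unitization.inr_injective (R := ℤ)
  rw [inr_mul', inr_nprod A hA, inr_nprod B hB,
    inr_nprod _ (hA.mono Finset.subset_union_left), ← Finset.prod_union_inter]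
  exact prod_absorb (fun j hj => by rw [← inr_mul', hid j hj]) (A ∩ B)
    Finset.inter_subset_union

lemma mul_rearrange (a b p q : ZE E) : (a * p) * (b * q) = (a * b) * (p * q) := by
  rw [mul_assoc, ← mul_assoc p, mul_comm p b, mul_assoc b, ← mul_assoc]

lemma eS_idem' (e : E) (S : Finset (Finset E))
    (h : ∀ R ∈ S, ∀ f ∈ R, f * e = f) : eS e S * eS e S = eS e S :=
  nprod_idem S _ (fun R hR => elt_sub_join_idem e R (h R hR))

lemma elt_mul_eS (e : E) (S : Finset (Finset E)) (hS : S.Nonempty)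
    (h : ∀ R ∈ S, ∀ f ∈ R, f * e = f) : elt e * eS e S = eS e S := by
  unfold eS
  rw [elt_mul_nprod e S hS]
  apply nprod_congr
  intro R hR
  have h2 : elt e * join R (fun f => f) = join R (fun f => f) := by
    rw [elt_mul_join]
    exact join_congr _ _ _ (fun f hf => by rw [mul_comm]; exact h R hR f hf)
  rw [mul_sub, elt_idem, h2]

end IndRes


lemma IndRes.below_aux {E : Type} [SemilatticeWithZero E] (d e f : E) (hf : f * e = f) :
    (d * f) * (d * e) = d * f := by
  rw [mul_mul_mul_comm, SemilatticeWithZero.mul_idem, hf]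

theorem statement_9 {E Γ : Type} [SemilatticeWithZero E] [Group Γ] [MulAction Γ E]
    (hact : IsGammaSL Γ E) (ℛ : E → Set (Finset E))
    (hcov : CovSystem ℛ) (h1 : CondI ℛ) (h2 : CondII ℛ) (h3 : CondIII Γ ℛ) :
    (∀ x ∈ EER ℛ, x * x = x) ∧ (∀ x ∈ EER ℛ, ∀ y ∈ EER ℛ, x * y ∈ EER ℛ) := by
  classical
  have habs : ∀ (e : E), e ≠ 0 → ∀ S : Finset (Finset E), ↑S ⊆ ℛ e →
      ∀ R ∈ S, ∀ f ∈ R, f * e = f := by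
    intro e he S hS R hR f hf
    exact ((hcov e he R (hS hR)).1 f hf).2
  constructor
  · rintro x (⟨e, S, he, hSne, hSR, rfl⟩ | hx)
    · exact eS_idem' e S (habs e he S hSR)
    · rw [Set.mem_singleton_iff] at hx
      subst hx
      rw [mul_zero]
  · rintro x hx y hy
    rcases hx with ⟨e, S, he, hSne, hSR, rfl⟩ | hx
    swap
    · rw [Set.mem_singleton_iff] at hx
      subst hx
      rw [zero_mul]
      exact Or.inr rfl
    rcases hy with ⟨d, Td, hd, hTne, hTR, rfl⟩ | hy
    swap
    · rw [Set.mem_singleton_iff] at hy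
      subst hy
      rw [mul_zero]
      exact Or.inr rfl
    set x := eS e S with hxdef
    set y := eS d Td with hydef
    have hxx : elt e * x = x := elt_mul_eS e S hSne (habs e he S hSR)
    have hyy : elt d * y = y := elt_mul_eS d Td hTne (habs d hd Td hTR)
    have hxy : x * y = (elt d * x) * (elt e * y) := by
      conv_lhs => rw [← hxx, ← hyy]
      rw [mul_rearrange (elt e) (elt d) x y, mul_rearrange (elt d) (elt e) x y,
        mul_comm (elt d) (elt e)]
    by_cases hu : d * e = 0
    · refine Or.inr ?_
      show x * y = 0
      rw [hxy, mul_rearrange, elt_mul, hu, elt_zero, zero_mul]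
    · set u := d * e with hudef
      have hue : e * d = u := mul_comm e d
      -- descriptions of `elt d * x` and `elt e * y`
      have hdx : elt d * x = nprod S
          (fun R => elt u - join ((R.image (fun f => d * f)).erase 0) (fun f => f)) := by
        rw [hxdef]
        unfold eS
        rw [elt_mul_nprod d S hSne]
        exact nprod_congr S _ _ (fun R _ => key_factor d e R)
      have hey : elt e * y = nprod Td
          (fun R => elt u - join ((R.image (fun f => e * f)).erase 0) (fun f => f)) := by
        rw [hydef]
        unfold eS
        rw [elt_mul_nprod e Td hTne]
        refine nprod_congr Td _ _ (fun R _ => ?_)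
        rw [key_factor e d R, hue]
      -- elements of the transported covers are absorbed by `u`
      have hbelS : ∀ R ∈ S, ∀ g ∈ (R.image (fun f => d * f)).erase 0, g * u = g := by
        intro R hR g hg
        obtain ⟨f, hf, rfl⟩ := Finset.mem_image.mp (Finset.mem_of_mem_erase hg)
        exact IndRes.below_aux d e f (habs e he S hSR R hR f hf)
      have hbelT : ∀ R ∈ Td, ∀ g ∈ (R.image (fun f => e * f)).erase 0, g * u = g := by
        intro R hR g hg
        obtain ⟨f, hf, rfl⟩ := Finset.mem_image.mp (Finset.mem_of_mem_erase hg)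
        rw [hudef, mul_comm d e]
        exact IndRes.below_aux e d f (habs d hd Td hTR R hR f hf)
      by_cases hz : (∀ R ∈ S, u ∉ (R.image (fun f => d * f)).erase 0) ∧
          (∀ R ∈ Td, u ∉ (R.image (fun f => e * f)).erase 0)
      · -- main case
        set A := S.image (fun R => (R.image (fun f => d * f)).erase 0) with hAdef
        set B := Td.image (fun R => (R.image (fun f => e * f)).erase 0) with hBdef
        have hAR : ∀ C ∈ A, C ∈ ℛ u := by
          intro C hC
          obtain ⟨R, hR, rfl⟩ := Finset.mem_image.mp hC
          rcases h1 d e hd he hu R (hSR hR) with hmem | hmem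
          · exact absurd hmem (hz.1 R hR)
          · exact hmem
        have hBR : ∀ C ∈ B, C ∈ ℛ u := by
          intro C hC
          obtain ⟨R, hR, rfl⟩ := Finset.mem_image.mp hC
          rcases h1 e d he hd (by rw [hue]; exact hu) R (hTR hR) with hmem | hmem
          · exact absurd (hue ▸ hmem) (hz.2 R hR)
          · rw [hue] at hmem
            exact hmem
        have hABR : ↑(A ∪ B) ⊆ ℛ u := by
          intro C hC
          rcases Finset.mem_union.mp hC with h' | h'
          · exact hAR C h'
          · exact hBR C h'
        have hidem : ∀ C ∈ A ∪ B,
            (elt u - join C (fun f => f)) * (elt u - join C (fun f => f))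
              = elt u - join C (fun f => f) := by
          intro C hC
          exact elt_sub_join_idem u C (fun f hf => ((hcov u hu C (hABR hC)).1 f hf).2)
        have hdx2 : elt d * x = nprod A (fun C => elt u - join C (fun f => f)) := by
          rw [hdx, hAdef]
          exact nprod_image S hSne _ _ (fun b hb => hidem b (Finset.mem_union_left B hb))
        have hey2 : elt e * y = nprod B (fun C => elt u - join C (fun f => f)) := by
          rw [hey, hBdef]
          exact nprod_image Td hTne _ _ (fun b hb => hidem b (Finset.mem_union_right A hb))
        have hAne : A.Nonempty := hSne.image _
        have hBne : B.Nonempty := hTne.image _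
        have hfinal : x * y = eS u (A ∪ B) := by
          rw [hxy, hdx2, hey2]
          exact nprod_union A B hAne hBne _ hidem
        exact Or.inl ⟨u, A ∪ B, hu, hAne.mono Finset.subset_union_left, hABR, hfinal⟩
      · -- some transported cover contains `u`: the product vanishes
        refine Or.inr ?_
        show x * y = 0
        rw [not_and_or] at hz
        push_neg at hz
        rcases hz with ⟨R, hR, hmem⟩ | ⟨R, hR, hmem⟩
        · have hfac : elt u - join ((R.image (fun f => d * f)).erase 0) (fun f => f) = 0 := by
            rw [join_top u _ hmem (hbelS R hR), sub_self]
          rw [hxy, hdx, nprod_eq_zero S _ hR hfac, zero_mul]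
        · have hfac : elt u - join ((R.image (fun f => e * f)).erase 0) (fun f => f) = 0 := by
            rw [join_top u _ hmem (hbelT R hR), sub_self]
          rw [hxy, hey, nprod_eq_zero Td _ hR hfac, mul_zero]
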